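/- (Leaf occurrences.) (1) For any T-term P, the evaluation tree se(P) contains the leaf T but not the leaf F. (2) For any F-term P, se(P) contains the leaf F but not the leaf T. (3) For any *-term P, se(P) contains both the leaf T and the leaf F. -/
import Mathlib


/-- Evaluation trees over a set `A` of atoms, with leaves `T` and `F`. -/
inductive ETree (A : Type) : Type
  | leafT : ETree A
  | leafF : ETree A
  | node : ETree A → A → ETree A → ETree A

namespace ETree

/-- Leaf replacement `X[T↦Y, F↦Z]`. -/
def repl {A : Type} : ETree A → ETree A → ETree A → ETree A
  | leafT, y, _ => y
  | leafF, _, z => z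
  | node l a r, y, z => node (repl l y z) a (repl r y z)

end ETree

namespace ETree

/-- The tree contains the leaf `T`. -/
def hasT {A : Type} : ETree A → Prop
  | leafT => True
  | leafF => False
  | node l _ r => hasT l ∨ hasT r

/-- The tree contains the leaf `F`. -/
def hasF {A : Type} : ETree A → Prop
  | leafT => False
  | leafF => True
  | node l _ r => hasF l ∨ hasF r

end ETree

/-- Closed sequential propositional statements over `A`:
`P ::= a | T | F | ¬P | P ∧❛ P | P ∨❛ P`. -/
inductive STerm (A : Type) : Type
  | atom : A → STerm A
  | tt : STerm A
  | ff : STerm A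
  | neg : STerm A → STerm A
  | and : STerm A → STerm A → STerm A
  | or : STerm A → STerm A → STerm A

/-- The short-circuit evaluation function `se : S_A → T_A`. -/
def se {A : Type} : STerm A → ETree A
  | .tt => .leafT
  | .ff => .leafF
  | .atom a => .node .leafT a .leafF
  | .neg P => (se P).repl .leafF .leafT
  | .and P Q => (se P).repl (se Q) .leafF
  | .or P Q => (se P).repl .leafT (se Q)

/-- T-terms: `P^T ::= T | (a ∧❛ P^T) ∨❛ P^T`. -/
inductive IsTTerm {A : Type} : STerm A → Prop
  | tt : IsTTerm .tt
  | node (a : A) {P Q} : IsTTerm P → IsTTerm Q → IsTTerm (.or (.and (.atom a) P) Q)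

/-- F-terms: `P^F ::= F | (a ∨❛ P^F) ∧❛ P^F`. -/
inductive IsFTerm {A : Type} : STerm A → Prop
  | ff : IsFTerm .ff
  | node (a : A) {P Q} : IsFTerm P → IsFTerm Q → IsFTerm (.and (.or (.atom a) P) Q)

/-- ℓ-terms: `P^ℓ ::= (a ∧❛ P^T) ∨❛ P^F | (¬a ∧❛ P^T) ∨❛ P^F`. -/
inductive IsLTerm {A : Type} : STerm A → Prop
  | pos (a : A) {P Q} : IsTTerm P → IsFTerm Q → IsLTerm (.or (.and (.atom a) P) Q)
  | neg (a : A) {P Q} : IsTTerm P → IsFTerm Q → IsLTerm (.or (.and (.neg (.atom a)) P) Q)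

mutual
/-- The category `P^c ::= P^ℓ | P^* ∧❛ P^d`. -/
inductive IsCTerm {A : Type} : STerm A → Prop
  | ell {P} : IsLTerm P → IsCTerm P
  | and {P Q} : IsStarTerm P → IsDTerm Q → IsCTerm (.and P Q)

/-- The category `P^d ::= P^ℓ | P^* ∨❛ P^c`. -/
inductive IsDTerm {A : Type} : STerm A → Prop
  | ell {P} : IsLTerm P → IsDTerm P
  | or {P Q} : IsStarTerm P → IsCTerm Q → IsDTerm (.or P Q)

/-- *-terms: `P^* ::= P^c | P^d`. -/
inductive IsStarTerm {A : Type} : STerm A → Prop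
  | c {P} : IsCTerm P → IsStarTerm P
  | d {P} : IsDTerm P → IsStarTerm P
end


lemma hasT_repl {A : Type} (x y z : ETree A) :
    (x.repl y z).hasT ↔ (x.hasT ∧ y.hasT) ∨ (x.hasF ∧ z.hasT) := by
  induction x <;> simp [ETree.repl, ETree.hasT, ETree.hasF, *] <;> tauto

lemma hasF_repl {A : Type} (x y z : ETree A) :
    (x.repl y z).hasF ↔ (x.hasT ∧ y.hasF) ∨ (x.hasF ∧ z.hasF) := by
  induction x <;> simp [ETree.repl, ETree.hasT, ETree.hasF, *] <;> tauto

lemma tlem {A : Type} {P : STerm A} (h : IsTTerm P) : (se P).hasT ∧ ¬ (se P).hasF := by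
  induction h with
  | tt => simp [se, ETree.hasT, ETree.hasF]
  | node a hP hQ ihP ihQ =>
    simp only [se, ETree.hasT, ETree.hasF, hasT_repl, hasF_repl] at *
    tauto

lemma flem {A : Type} {P : STerm A} (h : IsFTerm P) : (se P).hasF ∧ ¬ (se P).hasT := by
  induction h with
  | ff => simp [se, ETree.hasT, ETree.hasF]
  | node a hP hQ ihP ihQ =>
    simp only [se, ETree.hasT, ETree.hasF, hasT_repl, hasF_repl] at *
    tauto

lemma llem {A : Type} {P : STerm A} (h : IsLTerm P) : (se P).hasT ∧ (se P).hasF := by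
  cases h with
  | pos a hP hQ =>
    have h1 := tlem hP; have h2 := flem hQ
    simp only [se, ETree.hasT, ETree.hasF, hasT_repl, hasF_repl] at *
    tauto
  | neg a hP hQ =>
    have h1 := tlem hP; have h2 := flem hQ
    simp only [se, ETree.hasT, ETree.hasF, hasT_repl, hasF_repl] at *
    tauto

set_option maxHeartbeats 1000000 in
lemma starlem {A : Type} (P : STerm A) :
    (IsCTerm P → (se P).hasT ∧ (se P).hasF) ∧
    (IsDTerm P → (se P).hasT ∧ (se P).hasF) ∧
    (IsStarTerm P → (se P).hasT ∧ (se P).hasF) := by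
  induction P with
  | and P Q ihP ihQ =>
    refine ⟨fun h => ?_, fun h => ?_, fun h => ?_⟩
    · cases h with
      | ell h => exact llem h
      | and hP hQ =>
        have h1 := ihP.2.2 hP; have h2 := ihQ.2.1 hQ
        simp only [se, ETree.hasT, ETree.hasF, hasT_repl, hasF_repl] at *
        tauto
    · cases h with | ell h => exact llem h
    · cases h with
      | c h => cases h with
        | ell h => exact llem h
        | and hP hQ =>
          have h1 := ihP.2.2 hP; have h2 := ihQ.2.1 hQ
          simp only [se, ETree.hasT, ETree.hasF, hasT_repl, hasF_repl] at *
          tauto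
      | d h => cases h with | ell h => exact llem h
  | or P Q ihP ihQ =>
    refine ⟨fun h => ?_, fun h => ?_, fun h => ?_⟩
    · cases h with | ell h => exact llem h
    · cases h with
      | ell h => exact llem h
      | or hP hQ =>
        have h1 := ihP.2.2 hP; have h2 := ihQ.1 hQ
        simp only [se, ETree.hasT, ETree.hasF, hasT_repl, hasF_repl] at *
        tauto
    · cases h with
      | c h => cases h with | ell h => exact llem h
      | d h => cases h with
        | ell h => exact llem h
        | or hP hQ =>
          have h1 := ihP.2.2 hP; have h2 := ihQ.1 hQ
          simp only [se, ETree.hasT, ETree.hasF, hasT_repl, hasF_repl] at *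
          tauto
  | atom a =>
    refine ⟨fun h => ?_, fun h => ?_, fun h => ?_⟩
    · cases h with | ell h => cases h
    · cases h with | ell h => cases h
    · cases h with
      | c h => cases h with | ell h => cases h
      | d h => cases h with | ell h => cases h
  | tt =>
    refine ⟨fun h => ?_, fun h => ?_, fun h => ?_⟩
    · cases h with | ell h => cases h
    · cases h with | ell h => cases h
    · cases h with
      | c h => cases h with | ell h => cases h
      | d h => cases h with | ell h => cases h
  | ff =>
    refine ⟨fun h => ?_, fun h => ?_, fun h => ?_⟩
    · cases h with | ell h => cases h
    · cases h with | ell h => cases h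
    · cases h with
      | c h => cases h with | ell h => cases h
      | d h => cases h with | ell h => cases h
  | neg P ihP =>
    refine ⟨fun h => ?_, fun h => ?_, fun h => ?_⟩
    · cases h with | ell h => cases h
    · cases h with | ell h => cases h
    · cases h with
      | c h => cases h with | ell h => cases h
      | d h => cases h with | ell h => cases h

/-- Leaf occurrences: `se` of a T-term contains `T` but not `F`; of an F-term contains
`F` but not `T`; of a *-term contains both `T` and `F`. -/
theorem leaf_occurrences {A : Type} [Nonempty A] :
    (∀ P : STerm A, IsTTerm P → (se P).hasT ∧ ¬ (se P).hasF) ∧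
    (∀ P : STerm A, IsFTerm P → (se P).hasF ∧ ¬ (se P).hasT) ∧
    (∀ P : STerm A, IsStarTerm P → (se P).hasT ∧ (se P).hasF) := by
  exact ⟨fun P h => tlem h, fun P h => flem h, fun P h => (starlem P).2.2 h⟩
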